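/- Let a, b, c > 0, α > 0 and β ∈ (0,1]. Let h : [0,∞) → [0,∞) be continuous on [0,∞), differentiable on (0,∞), and satisfy h'(t) ≤ −a·h(t)^{1+α} + b·h(t) + c·h(t)^{1−β} for all t > 0. Then for every t > 0, h(t) ≤ (2/(a·α·t))^{1/α} + (4b/a)^{1/α} + (4c/a)^{1/(α+β)}. -/

import Mathlib

open Set Real

/-- A priori bound for the ordinary differential inequality
`h' ≤ -a h^{1+α} + b h + c h^{1-β}`, independent of the initial value. -/
theorem ode_ineq_bound (a b c α β : ℝ) (ha : 0 < a) (hb : 0 < b) (hc : 0 < c)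
    (hα : 0 < α) (hβ0 : 0 < β) (hβ1 : β ≤ 1)
    (h : ℝ → ℝ)
    (hnonneg : ∀ t, 0 ≤ t → 0 ≤ h t)
    (hcont : ContinuousOn h (Set.Ici 0))
    (hdiff : ∀ t, 0 < t → DifferentiableAt ℝ h t)
    (hineq : ∀ t, 0 < t →
      deriv h t ≤ -a * h t ^ (1 + α) + b * h t + c * h t ^ (1 - β)) :
    ∀ t, 0 < t →
      h t ≤ (2 / (a * α * t)) ^ (1 / α) + (4 * b / a) ^ (1 / α)
        + (4 * c / a) ^ (1 / (α + β)) := by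
  have hαβ : 0 < α + β := by linarith
  set K : ℝ := (2 / (a * α)) ^ (1 / α) with hKdef
  set B : ℝ := (4 * b / a) ^ (1 / α) with hBdef
  set C : ℝ := (4 * c / a) ^ (1 / (α + β)) with hCdef
  have hK : 0 < K := Real.rpow_pos_of_pos (by positivity) _
  have hB : 0 < B := Real.rpow_pos_of_pos (by positivity) _
  have hC : 0 < C := Real.rpow_pos_of_pos (by positivity) _
  set M : ℝ := B + C with hMdef
  have hM : 0 < M := by positivity
  set ψ : ℝ → ℝ := fun t => K * t ^ (-(1 / α)) with hψdef
  have hψpos : ∀ t, 0 < t → 0 < ψ t := fun t ht =>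
    mul_pos hK (Real.rpow_pos_of_pos ht _)
  have hψeq : ∀ t : ℝ, 0 < t → (2 / (a * α * t)) ^ (1 / α) = ψ t := by
    intro t ht
    have h1 : 2 / (a * α * t) = 2 / (a * α) * t⁻¹ := by
      field_simp
    rw [h1, Real.mul_rpow (by positivity) (by positivity),
      Real.inv_rpow ht.le, ← Real.rpow_neg ht.le]
  have hKα : K ^ α = 2 / (a * α) := by
    rw [hKdef, ← Real.rpow_mul (by positivity), one_div, inv_mul_cancel₀ hα.ne',
      Real.rpow_one]
  have hBα : B ^ α = 4 * b / a := by
    rw [hBdef, ← Real.rpow_mul (by positivity), one_div, inv_mul_cancel₀ hα.ne',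
      Real.rpow_one]
  have hCαβ : C ^ (α + β) = 4 * c / a := by
    rw [hCdef, ← Real.rpow_mul (by positivity), one_div, inv_mul_cancel₀ hαβ.ne',
      Real.rpow_one]
  -- derivative of ψ
  have hψderiv : ∀ t : ℝ, 0 < t → HasDerivAt ψ (-(a / 2) * ψ t ^ (1 + α)) t := by
    intro t ht
    have hd := (Real.hasDerivAt_rpow_const (x := t) (p := -(1 / α))
      (Or.inl ht.ne')).const_mul K
    refine hd.congr_deriv (Eq.symm ?_)
    have h1 : ψ t ^ (1 + α) = K ^ (1 + α) * t ^ (-(1 / α) * (1 + α)) := by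
      rw [hψdef]
      simp only
      rw [Real.mul_rpow hK.le (Real.rpow_nonneg ht.le _), ← Real.rpow_mul ht.le]
    have hK1 : K ^ (1 + α) = K * (2 / (a * α)) := by
      rw [Real.rpow_add hK, Real.rpow_one, hKα]
    have h2 : -(1 / α) * (1 + α) = -(1 / α) - 1 := by
      field_simp
      ring
    rw [h1, hK1, h2]
    have hαne : α ≠ 0 := hα.ne'
    field_simp
  -- pointwise inequality
  have hpt : ∀ x : ℝ, M ≤ x →
      -a * x ^ (1 + α) + b * x + c * x ^ (1 - β) ≤ -(a / 2) * x ^ (1 + α) := by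
    intro x hx
    have hx0 : 0 < x := lt_of_lt_of_le hM hx
    have hxB : B ≤ x := le_trans (le_add_of_nonneg_right hC.le) hx
    have hxC : C ≤ x := le_trans (le_add_of_nonneg_left hB.le) hx
    have h1 : b * x ≤ a / 4 * x ^ (1 + α) := by
      have he : x ^ (1 + α) = x * x ^ α := by
        rw [Real.rpow_add hx0, Real.rpow_one]
      rw [he]
      have h2 : 4 * b / a ≤ x ^ α := by
        rw [← hBα]; exact Real.rpow_le_rpow hB.le hxB hα.le
      calc b * x = a / 4 * (x * (4 * b / a)) := by field_simp
        _ ≤ a / 4 * (x * x ^ α) := by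
            apply mul_le_mul_of_nonneg_left _ (by positivity)
            exact mul_le_mul_of_nonneg_left h2 hx0.le
    have h2 : c * x ^ (1 - β) ≤ a / 4 * x ^ (1 + α) := by
      have he : x ^ (1 + α) = x ^ (1 - β) * x ^ (α + β) := by
        have : (1 : ℝ) + α = (1 - β) + (α + β) := by ring
        rw [this, Real.rpow_add hx0]
      rw [he]
      have h3 : 4 * c / a ≤ x ^ (α + β) := by
        rw [← hCαβ]; exact Real.rpow_le_rpow hC.le hxC hαβ.le
      calc c * x ^ (1 - β) = a / 4 * (x ^ (1 - β) * (4 * c / a)) := by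
            field_simp
        _ ≤ a / 4 * (x ^ (1 - β) * x ^ (α + β)) := by
            apply mul_le_mul_of_nonneg_left _ (by positivity)
            exact mul_le_mul_of_nonneg_left h3 (Real.rpow_nonneg hx0.le _)
    linarith
  -- main argument
  intro t0 ht0
  rw [hψeq t0 ht0]
  -- choose a small starting point s0 with h s0 ≤ ψ s0
  have h00 : (0 : ℝ) ∈ Set.Ici (0 : ℝ) := Set.self_mem_Ici
  have hN : 0 < h 0 + 1 := by have := hnonneg 0 le_rfl; linarith
  have hmem : h ⁻¹' Set.Iio (h 0 + 1) ∈ nhdsWithin 0 (Set.Ici 0) :=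
    (hcont 0 h00) (Iio_mem_nhds (by linarith))
  obtain ⟨ε, hε, hball⟩ := Metric.mem_nhdsWithin_iff.1 hmem
  set s0 : ℝ := min t0 (min (ε / 2) (2 / (a * α * (h 0 + 1) ^ α))) with hs0def
  have hs0pos : 0 < s0 := by
    apply lt_min ht0
    apply lt_min (by positivity)
    have : (0:ℝ) < (h 0 + 1) ^ α := Real.rpow_pos_of_pos hN _
    positivity
  have hs0t0 : s0 ≤ t0 := min_le_left _ _
  have hs0ε : s0 ≤ ε / 2 := le_trans (min_le_right _ _) (min_le_left _ _)
  have hs0c : s0 ≤ 2 / (a * α * (h 0 + 1) ^ α) :=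
    le_trans (min_le_right _ _) (min_le_right _ _)
  have hhs0 : h s0 ≤ ψ s0 := by
    have hs0ball : s0 ∈ Metric.ball (0:ℝ) ε ∩ Set.Ici 0 := by
      constructor
      · rw [Metric.mem_ball, Real.dist_eq, sub_zero, abs_of_nonneg hs0pos.le]
        linarith
      · exact hs0pos.le
    have h1 : h s0 < h 0 + 1 := hball hs0ball
    have h2 : h 0 + 1 ≤ ψ s0 := by
      rw [← hψeq s0 hs0pos]
      have h3 : (h 0 + 1) ^ α ≤ 2 / (a * α * s0) := by
        rw [le_div_iff₀ (by positivity)]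
        rw [le_div_iff₀ (by positivity)] at hs0c
        calc (h 0 + 1) ^ α * (a * α * s0)
            = s0 * (a * α * (h 0 + 1) ^ α) := by ring
          _ ≤ 2 := hs0c
      calc h 0 + 1 = ((h 0 + 1) ^ α) ^ (1/α) := by
            rw [← Real.rpow_mul hN.le, mul_one_div, div_self hα.ne', Real.rpow_one]
        _ ≤ (2 / (a * α * s0)) ^ (1/α) :=
            Real.rpow_le_rpow (Real.rpow_nonneg hN.le _) h3 (by positivity)
    linarith
  -- the comparison set
  set S : Set ℝ := Set.Icc s0 t0 ∩ (fun t => h t - ψ t) ⁻¹' Set.Iic M with hSdef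
  have hψcontOn : ContinuousOn ψ (Set.Icc s0 t0) := by
    intro t ht
    have ht0' : t ≠ 0 := (lt_of_lt_of_le hs0pos ht.1).ne'
    exact (continuousAt_const.mul
      (Real.continuousAt_rpow_const t _ (Or.inl ht0'))).continuousWithinAt
  have hcontIcc : ContinuousOn h (Set.Icc s0 t0) :=
    hcont.mono (fun x hx => le_trans hs0pos.le hx.1)
  have hScl : IsClosed S :=
    (hcontIcc.sub hψcontOn).preimage_isClosed_of_isClosed isClosed_Icc isClosed_Iic
  have hSne : S.Nonempty := ⟨s0, ⟨le_rfl, hs0t0⟩, by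
    simp only [Set.mem_preimage, Set.mem_Iic]
    have := hψpos s0 hs0pos
    linarith⟩
  have hSbdd : BddAbove S := ⟨t0, fun x hx => hx.1.2⟩
  set t1 : ℝ := sSup S with ht1def
  have ht1S : t1 ∈ S := hScl.csSup_mem hSne hSbdd
  have ht1Icc : t1 ∈ Set.Icc s0 t0 := ht1S.1
  have ht1pos : 0 < t1 := lt_of_lt_of_le hs0pos ht1Icc.1
  have ht1le : h t1 - ψ t1 ≤ M := ht1S.2
  -- on (t1, t0], h > ψ + M
  have hgt : ∀ t, t ∈ Set.Ioo t1 t0 → ψ t + M < h t := by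
    intro t ht
    by_contra hle
    push_neg at hle
    have : t ∈ S := ⟨⟨le_trans ht1Icc.1 ht.1.le, ht.2.le⟩, by
      simp only [Set.mem_preimage, Set.mem_Iic]; linarith⟩
    exact absurd (le_csSup hSbdd this) (not_le.2 ht.1)
  -- g is antitone on [t1, t0]
  set g : ℝ → ℝ := fun t => h t - ψ t - M with hgdef
  have hganti : AntitoneOn g (Set.Icc t1 t0) := by
    apply antitoneOn_of_deriv_nonpos (convex_Icc _ _)
    · exact ((hcontIcc.mono (Set.Icc_subset_Icc_left ht1Icc.1)).sub
        (hψcontOn.mono (Set.Icc_subset_Icc_left ht1Icc.1))).sub continuousOn_const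
    · rw [interior_Icc]
      intro t ht
      have htpos : 0 < t := lt_trans ht1pos ht.1
      exact (((hdiff t htpos).sub (hψderiv t htpos).differentiableAt).sub_const
        M).differentiableWithinAt
    · rw [interior_Icc]
      intro t ht
      have htpos : 0 < t := lt_trans ht1pos ht.1
      have hgt' := hgt t ht
      have hψt := hψpos t htpos
      have hMh : M ≤ h t := by linarith
      have hψh : ψ t ≤ h t := by linarith
      have hd : HasDerivAt g (deriv h t - -(a / 2) * ψ t ^ (1 + α)) t :=
        (((hdiff t htpos).hasDerivAt).sub (hψderiv t htpos)).sub_const M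
      rw [hd.deriv]
      have h1 : deriv h t ≤ -(a / 2) * h t ^ (1 + α) :=
        le_trans (hineq t htpos) (hpt (h t) hMh)
      have h2 : ψ t ^ (1 + α) ≤ h t ^ (1 + α) :=
        Real.rpow_le_rpow hψt.le hψh (by linarith)
      nlinarith [ha.le]
  -- conclude
  have hMBC : M = B + C := hMdef
  rcases eq_or_lt_of_le ht1Icc.2 with heq | hlt
  · have h2 := ht1le
    rw [heq] at h2
    linarith
  · have h1 : g t0 ≤ g t1 :=
      hganti ⟨le_rfl, ht1Icc.2⟩ ⟨ht1Icc.2, le_rfl⟩ ht1Icc.2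
    have h1' : h t0 - ψ t0 - M ≤ h t1 - ψ t1 - M := h1
    linarith
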